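/- For any finite partition of the collection ℱ of all nonempty finite subsets of ℕ into r cells, one of the cells contains an IP-ring, i.e., a set of the form FU((αᵢ)) = {⋃_{i∈β} αᵢ : β ∈ ℱ} for some sequence α₁ < α₂ < ⋯ of nonempty finite subsets of ℕ (where α < β means max α < min β). -/

import Mathlib

open Set Pointwise

/-- The set of finite sums of a sequence of integers. -/
def FS (n : ℕ → ℤ) : Set ℤ :=
  {m | ∃ s : Finset ℕ, s.Nonempty ∧ m = ∑ i ∈ s, n i}

/-- `A` is an IP-set if it contains all finite sums of some integer sequence. -/
def IsIPSet (A : Set ℤ) : Prop := ∃ n : ℕ → ℤ, FS n ⊆ A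

/-- `B` is an IP*-set if it meets every IP-set. -/
def IsIPStar (B : Set ℤ) : Prop := ∀ A : Set ℤ, IsIPSet A → (B ∩ A).Nonempty

/-- `α < β` for finite subsets of ℕ: every element of `α` is less than every element of `β`. -/
def FinsetLt (α β : Finset ℕ) : Prop := ∀ x ∈ α, ∀ y ∈ β, x < y

/-- A sequence `α₁ < α₂ < ⋯` of nonempty finite subsets of ℕ generating an IP-ring. -/
def IsIPRingSeq (a : ℕ → Finset ℕ) : Prop :=
  (∀ i, (a i).Nonempty) ∧ ∀ i, FinsetLt (a i) (a (i + 1))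

/-- The IP-ring `FU((αᵢ))`: all finite unions of the `αᵢ`. -/
def FU (a : ℕ → Finset ℕ) : Set (Finset ℕ) :=
  {s | ∃ β : Finset ℕ, β.Nonempty ∧ s = β.biUnion a}

/-- `n_α = ∑_{i ∈ α} nᵢ`. -/
def sumIdx (n : ℕ → ℤ) (α : Finset ℕ) : ℤ := ∑ i ∈ α, n i

/-- The family `𝒢_A` of subsets of ℤ containing some IP-subset of the
IP-set `A = {n_α}_{α ∈ ℱ}`. -/
def GA (n : ℕ → ℤ) : Set (Set ℤ) :=
  {B | ∃ a : ℕ → Finset ℕ, IsIPRingSeq a ∧ sumIdx n '' FU a ⊆ B}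

/-- The dual family `𝒢*`. -/
def dualFam (G : Set (Set ℤ)) : Set (Set ℤ) :=
  {B | ∀ A ∈ G, (B ∩ A).Nonempty}

/-- Natural powers of a homeomorphism. -/
def hnpow {X : Type*} [TopologicalSpace X] (T : X ≃ₜ X) : ℕ → X ≃ₜ X
  | 0 => Homeomorph.refl X
  | (k + 1) => (hnpow T k).trans T

/-- Integer powers of a homeomorphism. -/
def hzpow {X : Type*} [TopologicalSpace X] (T : X ≃ₜ X) : ℤ → X ≃ₜ X
  | Int.ofNat k => hnpow T k
  | Int.negSucc k => (hnpow T (k + 1)).symm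

/-- A homeomorphism is minimal if every (two-sided) orbit is dense. -/
def IsMinimalHomeo {X : Type*} [TopologicalSpace X] (T : X ≃ₜ X) : Prop :=
  ∀ x : X, Dense (Set.range fun m : ℤ => hzpow T m x)

/-- `(X,T)` is mixing along the IP-set `A = {n_α}`: every `N(U,V)` belongs to `𝒢_A*`. -/
def MixingAlong {X : Type*} [TopologicalSpace X] (T : X ≃ₜ X) (n : ℕ → ℤ) : Prop :=
  ∀ U V : Set X, IsOpen U → IsOpen V → U.Nonempty → V.Nonempty →
    {m : ℤ | (U ∩ hzpow T m ⁻¹' V).Nonempty} ∈ dualFam (GA n)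

/-- `(X,T)` is topologically mildly mixing: every `N(U,V)` is an IP*-set. -/
def TopMildlyMixing {X : Type*} [TopologicalSpace X] (T : X ≃ₜ X) : Prop :=
  ∀ U V : Set X, IsOpen U → IsOpen V → U.Nonempty → V.Nonempty →
    IsIPStar {m : ℤ | (U ∩ hzpow T m ⁻¹' V).Nonempty}

/-- An integral polynomial: an integer-valued function which is given by a
polynomial (with rational coefficients) on ℤ. -/
def IsIntPoly (p : ℤ → ℤ) : Prop :=
  ∃ q : Polynomial ℚ, ∀ m : ℤ, (p m : ℚ) = q.eval (m : ℚ)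


section HindmanIPRingAux

private noncomputable def hind (β : Finset ℕ) : ℕ →₀ ℕ := ∑ i ∈ β, Finsupp.single i 1

private lemma hind_apply (β : Finset ℕ) (k : ℕ) : hind β k = if k ∈ β then 1 else 0 := by
  classical
  rw [hind, Finset.sum_apply']
  simp [Finsupp.single_apply]

private lemma hind_support (β : Finset ℕ) : (hind β).support = β := by
  ext k
  simp [Finsupp.mem_support_iff, hind_apply]

private noncomputable def hstream : Stream' (ℕ →₀ ℕ) := fun i => Finsupp.single i 1

private lemma hstream_char {s : Stream' (ℕ →₀ ℕ)} {x : ℕ →₀ ℕ} (hx : x ∈ Hindman.FS s) :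
    ∀ n, s = hstream.drop n → ∃ β : Finset ℕ, β.Nonempty ∧ (∀ i ∈ β, n ≤ i) ∧ x = hind β := by
  induction hx with
  | head' s =>
    intro n hn
    refine ⟨{n}, Finset.singleton_nonempty n, by simp, ?_⟩
    subst hn
    rw [Stream'.head_drop]
    simp [hind, hstream]
    rfl
  | tail' s m h ih =>
    intro n hn
    obtain ⟨β, h1, h2, h3⟩ := ih (n + 1)
      (by rw [hn, Stream'.tail_eq_drop, Stream'.drop_drop, Nat.add_comm])
    exact ⟨β, h1, fun i hi => (Nat.le_succ n).trans (h2 i hi), h3⟩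
  | cons' s m h ih =>
    intro n hn
    obtain ⟨β, h1, h2, h3⟩ := ih (n + 1)
      (by rw [hn, Stream'.tail_eq_drop, Stream'.drop_drop, Nat.add_comm])
    have hnβ : n ∉ β := fun hmem => by have := h2 n hmem; omega
    refine ⟨insert n β, Finset.insert_nonempty n β, ?_, ?_⟩
    · intro i hi
      rcases Finset.mem_insert.mp hi with h' | hi
      · omega
      · exact (Nat.le_succ n).trans (h2 i hi)
    · subst hn
      rw [Stream'.head_drop, h3]
      simp only [hind]
      rw [Finset.sum_insert hnβ]
      rfl

private lemma hsupport_sum (β : Finset ℕ) (f : ℕ → (ℕ →₀ ℕ)) :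
    (∑ k ∈ β, f k).support = β.biUnion fun k => (f k).support := by
  ext x
  simp only [Finsupp.mem_support_iff, Finset.mem_biUnion]
  rw [Finset.sum_apply']
  rw [← not_iff_not]
  push_neg
  rw [Finset.sum_eq_zero_iff]

private lemma hexists_high (S : ℕ → Finset ℕ)
    (hdis : ∀ j k, j ≠ k → Disjoint (S j) (S k)) (n m : ℕ) :
    ∃ k, n < k ∧ ∀ x ∈ S k, m < x := by
  classical
  by_contra hcon
  push_neg at hcon
  set g : ℕ → ℕ := fun k => if hk : ∃ x ∈ S k, x ≤ m then hk.choose else 0 with hg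
  have hIoi : (Set.Ioi n).Finite := by
    apply Set.Finite.of_finite_image (f := g)
    · apply Set.Finite.subset (Set.finite_Iic m)
      rintro _ ⟨k, hk, rfl⟩
      obtain ⟨x, hx, hxm⟩ := hcon k hk
      have hex : ∃ x ∈ S k, x ≤ m := ⟨x, hx, hxm⟩
      simp only [hg, dif_pos hex]
      exact hex.choose_spec.2
    · intro j hj k hk hjk
      by_contra hne
      obtain ⟨xj, hxj, hxjm⟩ := hcon j hj
      obtain ⟨xk, hxk, hxkm⟩ := hcon k hk
      have hexj : ∃ x ∈ S j, x ≤ m := ⟨xj, hxj, hxjm⟩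
      have hexk : ∃ x ∈ S k, x ≤ m := ⟨xk, hxk, hxkm⟩
      have h1 : g j ∈ S j := by simp only [hg, dif_pos hexj]; exact hexj.choose_spec.1
      have h2 : g k ∈ S k := by simp only [hg, dif_pos hexk]; exact hexk.choose_spec.1
      rw [hjk] at h1
      exact Finset.disjoint_left.mp (hdis j k hne) h1 h2
  exact (Set.Ioi_infinite n) hIoi

private lemma hexists_mono (S : ℕ → Finset ℕ)
    (H : ∀ n m : ℕ, ∃ k, n < k ∧ ∀ x ∈ S k, m < x) :
    ∃ φ : ℕ → ℕ, StrictMono φ ∧ ∀ k, FinsetLt (S (φ k)) (S (φ (k + 1))) := by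
  choose f hf1 hf2 using H
  refine ⟨fun k => Nat.rec 0 (fun _ p => f p ((S p).sup id)) k, ?_, ?_⟩
  · apply strictMono_nat_of_lt_succ
    intro k
    exact hf1 _ _
  · intro k x hx y hy
    have h1 : x ≤ (S (Nat.rec 0 (fun _ p => f p ((S p).sup id)) k : ℕ)).sup id :=
      Finset.le_sup (f := id) hx
    have h2 := hf2 _ ((S (Nat.rec 0 (fun _ p => f p ((S p).sup id)) k : ℕ)).sup id) y hy
    omega

end HindmanIPRingAux

/-- Hindman's theorem for IP-rings: for any finite partition of the collection of
nonempty finite subsets of ℕ into `r` cells, one cell contains an IP-ring. -/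
theorem hindman_ipring (r : ℕ) (C : Fin r → Set (Finset ℕ))
    (hcover : ∀ α : Finset ℕ, α.Nonempty → ∃ i, α ∈ C i) :
    ∃ i, ∃ a : ℕ → Finset ℕ, IsIPRingSeq a ∧ FU a ⊆ C i := by
  classical
  set cell : Fin r → Set (ℕ →₀ ℕ) :=
    fun i => {x | (∀ k, x k ≤ 1) ∧ x.support.Nonempty ∧ x.support ∈ C i} with hcell
  have hcov : Hindman.FS hstream ⊆ ⋃₀ (Set.range cell) := by
    intro x hx
    obtain ⟨β, hβ, -, rfl⟩ := hstream_char hx 0 rfl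
    obtain ⟨i, hi⟩ := hcover β hβ
    refine ⟨cell i, ⟨i, rfl⟩, ?_, ?_, ?_⟩
    · intro k; rw [hind_apply]; split <;> omega
    · rw [hind_support]; exact hβ
    · rw [hind_support]; exact hi
  obtain ⟨c, hc, b, hb⟩ := Hindman.FS_partition_regular hstream (Set.range cell)
    (Set.finite_range cell) hcov
  obtain ⟨i, rfl⟩ := hc
  set S : ℕ → Finset ℕ := fun k => (b.get k).support with hS
  have hdis : ∀ j k, j ≠ k → Disjoint (S j) (S k) := by
    have key : ∀ j k, j < k → Disjoint (S j) (S k) := by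
      intro j k hjk
      rw [Finset.disjoint_left]
      intro x hxj hxk
      have hsum := hb (Hindman.FS.add_two b j k hjk)
      have hle := hsum.1 x
      rw [Finsupp.add_apply] at hle
      have h1 : (b.get j) x ≠ 0 := Finsupp.mem_support_iff.mp hxj
      have h2 : (b.get k) x ≠ 0 := Finsupp.mem_support_iff.mp hxk
      omega
    intro j k h
    rcases lt_or_gt_of_ne h with h' | h'
    · exact key j k h'
    · exact (key k j h').symm
  obtain ⟨φ, hφmono, hφlt⟩ := hexists_mono S (hexists_high S hdis)
  refine ⟨i, fun k => S (φ k), ⟨fun k => (hb (Hindman.FS.singleton b (φ k))).2.1, hφlt⟩, ?_⟩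
  rintro s ⟨β, hβ, rfl⟩
  have hmem : (∑ k ∈ β, b.get (φ k)) ∈ Hindman.FS b := by
    have heq : ∑ j ∈ β.image φ, b.get j = ∑ k ∈ β, b.get (φ k) :=
      Finset.sum_image (fun x _ y _ h => hφmono.injective h)
    rw [← heq]
    exact Hindman.FS.finset_sum b _ (hβ.image φ)
  have hc2 := (hb hmem).2.2
  rwa [hsupport_sum] at hc2
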